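/- Let n ≥ 2, N = n(n−1)/2, and let Ŝ ∈ 𝒮_c have unit Frobenius norm. Fix ρ ∈ (0,1) and let T^cos_c = H·T^cos_{i;jk}·H for a cosine triplet mask T^cos_{i;jk}, with Δ := ⟨T^cos_c, Ŝ⟩_F > 0. Suppose R̂ = ρ·Ŝ + E, where E is a zero-mean Gaussian random element of the (N−1)-dimensional subspace {Ŝ}^⊥ ∩ 𝒮_c with covariance σ²·Id on that subspace, where σ² = (1−ρ²)/(N−1). Then P[⟨T^cos_c, R̂⟩_F > 0] ≥ Φ( ρ·Δ / √( (2/(N−1))·(1−ρ) ) ). -/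

import Mathlib

open MeasureTheory ProbabilityTheory Matrix

noncomputable section

/-- Frobenius inner product of real matrices: `⟨A, B⟩_F = tr(Aᵀ B)`. -/
def finner {m k : Type*} [Fintype m] [Fintype k] (A B : Matrix m k ℝ) : ℝ :=
  (Aᵀ * B).trace

/-- Frobenius norm. -/
def fnorm {m k : Type*} [Fintype m] [Fintype k] (A : Matrix m k ℝ) : ℝ :=
  Real.sqrt (finner A A)

/-- `M` lies in `𝒮_c`: it is symmetric and `M 𝟙 = 0`. -/
def centeredSym {n : ℕ} (M : Matrix (Fin n) (Fin n) ℝ) : Prop :=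
  M.IsSymm ∧ M *ᵥ (fun _ => (1 : ℝ)) = 0

/-- Standard normal CDF `Φ`. -/
def Phi (x : ℝ) : ℝ := ((gaussianReal 0 1) (Set.Iic x)).toReal

/-- `E` is a zero-mean Gaussian random element supported on the subspace of matrices described by
the membership predicate `W`, with covariance `σ2 • Id` on that subspace: `E` takes values in `W`
and every linear functional `⟨T, ·⟩_F` with `T ∈ W` has the centered Gaussian law of variance
`σ2 * ‖T‖_F²`. -/
def IsIsoGaussianOn {n : ℕ} {Ω : Type*} [MeasurableSpace Ω] (P : Measure Ω)
    (E : Ω → Matrix (Fin n) (Fin n) ℝ) (W : Matrix (Fin n) (Fin n) ℝ → Prop) (σ2 : ℝ) : Prop :=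
  (∀ ω, W (E ω)) ∧
  ∀ T : Matrix (Fin n) (Fin n) ℝ, W T →
    Measure.map (fun ω => finner T (E ω)) P
      = gaussianReal 0 (Real.toNNReal (σ2 * (fnorm T) ^ 2))

/-- The centering matrix `H = I − (1/n) 𝟙 𝟙ᵀ`. -/
def Hmat (n : ℕ) : Matrix (Fin n) (Fin n) ℝ :=
  1 - ((n : ℝ)⁻¹) • Matrix.of (fun _ _ => (1 : ℝ))

/-- The squared-Euclidean triplet mask `T_{i;jk}`. -/
def tripletMask {n : ℕ} (i j k : Fin n) : Matrix (Fin n) (Fin n) ℝ :=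
  Matrix.of fun a b =>
    if a = j ∧ b = j then 1
    else if a = k ∧ b = k then -1
    else if (a = i ∧ b = j) ∨ (a = j ∧ b = i) then -1
    else if (a = i ∧ b = k) ∨ (a = k ∧ b = i) then 1
    else 0

/-- The cosine triplet mask `T^cos_{i;jk}`. -/
def cosMask {n : ℕ} (i j k : Fin n) : Matrix (Fin n) (Fin n) ℝ :=
  Matrix.of fun a b =>
    if (a = i ∧ b = j) ∨ (a = j ∧ b = i) then 1 / 2
    else if (a = i ∧ b = k) ∨ (a = k ∧ b = i) then -(1 / 2)
    else 0

section Aux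
open MeasureTheory ProbabilityTheory Matrix
open scoped NNReal

variable {n : ℕ}

lemma finner_eq_sum (A B : Matrix (Fin n) (Fin n) ℝ) :
    finner A B = ∑ a, ∑ b, A a b * B a b := by
  simp only [finner, Matrix.trace, Matrix.diag, Matrix.mul_apply, Matrix.transpose_apply]
  rw [Finset.sum_comm]

lemma finner_add_right (A B C : Matrix (Fin n) (Fin n) ℝ) :
    finner A (B + C) = finner A B + finner A C := by
  simp [finner, Matrix.mul_add]

lemma finner_sub_right (A B C : Matrix (Fin n) (Fin n) ℝ) :
    finner A (B - C) = finner A B - finner A C := by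
  simp [finner, Matrix.mul_sub]

lemma finner_smul_right (A : Matrix (Fin n) (Fin n) ℝ) (r : ℝ) (B : Matrix (Fin n) (Fin n) ℝ) :
    finner A (r • B) = r * finner A B := by
  simp [finner, Matrix.mul_smul]

lemma finner_sub_left (A B C : Matrix (Fin n) (Fin n) ℝ) :
    finner (A - B) C = finner A C - finner B C := by
  simp [finner, Matrix.transpose_sub, Matrix.sub_mul]

lemma finner_smul_left (r : ℝ) (A B : Matrix (Fin n) (Fin n) ℝ) :
    finner (r • A) B = r * finner A B := by
  simp [finner, Matrix.transpose_smul, Matrix.smul_mul]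

lemma finner_comm (A B : Matrix (Fin n) (Fin n) ℝ) : finner A B = finner B A := by
  rw [finner, ← Matrix.trace_transpose, Matrix.transpose_mul, Matrix.transpose_transpose]
  rfl

lemma finner_self_nonneg (A : Matrix (Fin n) (Fin n) ℝ) : 0 ≤ finner A A := by
  rw [finner_eq_sum]
  exact Finset.sum_nonneg fun _ _ => Finset.sum_nonneg fun _ _ => mul_self_nonneg _

lemma finner_cauchy (A B : Matrix (Fin n) (Fin n) ℝ) :
    (finner A B) ^ 2 ≤ finner A A * finner B B := by
  have := Finset.sum_mul_sq_le_sq_mul_sq Finset.univ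
    (fun p : Fin n × Fin n => A p.1 p.2) (fun p : Fin n × Fin n => B p.1 p.2)
  simp only [finner_eq_sum]
  simpa [Fintype.sum_prod_type, sq] using this

lemma Hmat_transpose : (Hmat n)ᵀ = Hmat n := by
  ext a b
  simp [Hmat, Matrix.one_apply, eq_comm]

lemma Hmat_mul_Hmat (hn : 0 < n) : Hmat n * Hmat n = Hmat n := by
  have h0 : (n : ℝ) ≠ 0 := Nat.cast_ne_zero.mpr hn.ne'
  ext a b
  simp only [Hmat, Matrix.mul_apply, Matrix.sub_apply, Matrix.smul_apply, Matrix.of_apply,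
    Matrix.one_apply, smul_eq_mul, mul_one, sub_mul, mul_sub]
  rw [Finset.sum_sub_distrib, Finset.sum_sub_distrib]
  simp [Finset.sum_ite_eq, Finset.sum_ite_eq', Finset.mul_sum, Finset.card_univ]
  field_simp
  ring

lemma Hmat_mulVec_one (hn : 0 < n) : Hmat n *ᵥ (fun _ => (1:ℝ)) = 0 := by
  have h0 : (n : ℝ) ≠ 0 := Nat.cast_ne_zero.mpr hn.ne'
  ext a
  simp [Hmat, Matrix.mulVec, dotProduct, Matrix.sub_apply, Matrix.one_apply,
    Finset.sum_ite_eq, Finset.card_univ, Finset.sum_sub_distrib]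
  field_simp
  ring

lemma cosMask_transpose (i j k : Fin n) : (cosMask i j k)ᵀ = cosMask i j k := by
  ext a b
  simp only [cosMask, Matrix.transpose_apply, Matrix.of_apply]
  congr 1
  · exact propext (by tauto)
  · congr 1
    exact propext (by tauto)

lemma cosMask_self (i j k : Fin n) (hij : i ≠ j) (hik : i ≠ k) (hjk : j ≠ k) :
    finner (cosMask i j k) (cosMask i j k) = 1 := by
  classical
  have hS : finner (cosMask i j k) (cosMask i j k)
      = ∑ p ∈ ({(i,j),(j,i),(i,k),(k,i)} : Finset (Fin n × Fin n)),
          cosMask i j k p.1 p.2 * cosMask i j k p.1 p.2 := by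
    rw [finner_eq_sum, ← Fintype.sum_prod_type']
    refine (Finset.sum_subset (Finset.subset_univ _) ?_).symm
    intro p _ hp
    simp only [Finset.mem_insert, Finset.mem_singleton, Prod.ext_iff] at hp
    push_neg at hp
    obtain ⟨h1, h2, h3, h4⟩ := hp
    have : cosMask i j k p.1 p.2 = 0 := by
      simp only [cosMask, Matrix.of_apply]
      rw [if_neg, if_neg]
      · rintro (⟨ha, hb⟩ | ⟨ha, hb⟩)
        · exact (h3 ha) hb
        · exact (h4 ha) hb
      · rintro (⟨ha, hb⟩ | ⟨ha, hb⟩)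
        · exact (h1 ha) hb
        · exact (h2 ha) hb
    rw [this, mul_zero]
  rw [hS]
  have e1 : cosMask i j k i j = 1 / 2 := by simp [cosMask]
  have e2 : cosMask i j k j i = 1 / 2 := by simp [cosMask]
  have e3 : cosMask i j k i k = -(1 / 2) := by
    simp [cosMask, hjk.symm, hij.symm, hij]
  have e4 : cosMask i j k k i = -(1 / 2) := by
    simp [cosMask, hik.symm, hjk.symm]
  rw [show ({(i,j),(j,i),(i,k),(k,i)} : Finset (Fin n × Fin n))
      = insert (i,j) (insert (j,i) (insert (i,k) {(k,i)})) from rfl]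
  rw [Finset.sum_insert (by simp [Prod.ext_iff, hij, hik, hjk, hij.symm]),
      Finset.sum_insert (by simp [Prod.ext_iff, hij, hik, hjk, hij.symm, hik.symm, hjk.symm]),
      Finset.sum_insert (by simp [Prod.ext_iff, hij, hik, hjk, hik.symm]),
      Finset.sum_singleton]
  simp only [e1, e2, e3, e4]
  norm_num

lemma Phi_mono {a b : ℝ} (h : a ≤ b) : Phi a ≤ Phi b := by
  unfold Phi
  exact ENNReal.toReal_mono (measure_ne_top _ _) (measure_mono (Set.Iic_subset_Iic.2 h))

lemma Phi_le_one (x : ℝ) : Phi x ≤ 1 := by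
  unfold Phi
  rw [show (1:ℝ) = (1 : ENNReal).toReal from rfl]
  exact ENNReal.toReal_mono (by norm_num) prob_le_one

lemma gauss_Ioi (v : ℝ≥0) (hv : v ≠ 0) (c : ℝ) :
    (gaussianReal 0 v (Set.Ioi (-c))).toReal = Phi (c / Real.sqrt v) := by
  set σ : ℝ := Real.sqrt v with hσdef
  have hσpos : 0 < σ := Real.sqrt_pos.2 (by positivity)
  have hσsq : (⟨σ^2, sq_nonneg _⟩ : ℝ≥0) * 1 = v := by
    ext
    simp [hσdef, Real.sq_sqrt (v.coe_nonneg)]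
  have hmap : (gaussianReal 0 1).map (σ * ·) = gaussianReal 0 v := by
    rw [gaussianReal_map_const_mul σ, mul_zero]
    exact congrArg _ hσsq
  have h1 : gaussianReal 0 v (Set.Ioi (-c))
      = gaussianReal 0 1 (Set.Ioi (-(c/σ))) := by
    rw [← hmap, Measure.map_apply (f := fun x : ℝ => σ * x) (by fun_prop) measurableSet_Ioi]
    congr 1
    ext x
    simp only [Set.mem_preimage, Set.mem_Ioi]
    rw [show -(c/σ) = (-c)/σ by ring, div_lt_iff₀ hσpos, mul_comm]
  have hneg : (gaussianReal 0 1).map ((-1 : ℝ) * ·) = gaussianReal 0 1 := by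
    rw [gaussianReal_map_const_mul (-1 : ℝ), mul_zero]
    congr 1
    ext
    norm_num
  have h2 : gaussianReal 0 1 (Set.Ioi (-(c/σ))) = gaussianReal 0 1 (Set.Iio (c/σ)) := by
    conv_lhs => rw [← hneg]
    rw [Measure.map_apply (f := fun x : ℝ => (-1) * x) (by fun_prop) measurableSet_Ioi]
    congr 1
    ext x
    simp only [Set.mem_preimage, Set.mem_Ioi, Set.mem_Iio]
    constructor <;> intro h <;> nlinarith
  have h3 : gaussianReal 0 1 (Set.Iio (c/σ)) = gaussianReal 0 1 (Set.Iic (c/σ)) := by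
    refine measure_congr (Iio_ae_eq_Iic' ?_)
    exact gaussianReal_absolutelyContinuous 0 (by norm_num) (measure_singleton _)
  rw [h1, h2, h3, Phi]

end Aux
/-- cosine-similarity case, universal lower bound. -/
theorem stmt5 {n : ℕ} (hn : 2 ≤ n) (N : ℕ) (hN : N = n * (n - 1) / 2)
    {Ω : Type*} [MeasurableSpace Ω] (P : Measure Ω) [IsProbabilityMeasure P]
    (Shat : Matrix (Fin n) (Fin n) ℝ) (hSc : centeredSym Shat) (hSnorm : fnorm Shat = 1)
    (ρ : ℝ) (hρ : ρ ∈ Set.Ioo (0 : ℝ) 1)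
    (i j k : Fin n) (hij : i ≠ j) (hik : i ≠ k) (hjk : j ≠ k)
    (Tc : Matrix (Fin n) (Fin n) ℝ) (hTc : Tc = Hmat n * cosMask i j k * Hmat n)
    (hΔ : 0 < finner Tc Shat)
    (E : Ω → Matrix (Fin n) (Fin n) ℝ)
    (hE : IsIsoGaussianOn P E
      (fun M => centeredSym M ∧ finner Shat M = 0) ((1 - ρ ^ 2) / ((N : ℝ) - 1)))
    (Rhat : Ω → Matrix (Fin n) (Fin n) ℝ) (hR : ∀ ω, Rhat ω = ρ • Shat + E ω) :
    (P {ω | 0 < finner Tc (Rhat ω)}).toReal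
      ≥ Phi (ρ * finner Tc Shat / Real.sqrt ((2 / ((N : ℝ) - 1)) * (1 - ρ))) := by
  obtain ⟨hρ0, hρ1⟩ := hρ
  have hnpos : 0 < n := lt_of_lt_of_le two_pos hn
  have hHH : Hmat n * Hmat n = Hmat n := Hmat_mul_Hmat hnpos
  set H : Matrix (Fin n) (Fin n) ℝ := Hmat n with hH
  set C : Matrix (Fin n) (Fin n) ℝ := cosMask i j k with hC
  set Δ : ℝ := finner Tc Shat with hΔdef
  -- Tc is centered symmetric
  have hTsym : Tc.IsSymm := by
    show Tcᵀ = Tc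
    rw [hTc, Matrix.transpose_mul, Matrix.transpose_mul, Hmat_transpose, cosMask_transpose,
      Matrix.mul_assoc]
  have hTcent : centeredSym Tc := by
    refine ⟨hTsym, ?_⟩
    have hHv : H *ᵥ (fun _ => (1:ℝ)) = 0 := Hmat_mulVec_one hnpos
    rw [hTc, ← Matrix.mulVec_mulVec, hHv, Matrix.mulVec_zero]
  -- ⟨Ŝ, Ŝ⟩ = 1
  have hSS : finner Shat Shat = 1 := by
    have h0 := finner_self_nonneg Shat
    have h1 : Real.sqrt (finner Shat Shat) = 1 := hSnorm
    nlinarith [Real.sq_sqrt h0, h1]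
  -- orthogonal component
  set Tp : Matrix (Fin n) (Fin n) ℝ := Tc - Δ • Shat with hTp
  have hTpsym : Tp.IsSymm := by
    show Tpᵀ = Tp
    rw [hTp, Matrix.transpose_sub, Matrix.transpose_smul, hTsym.eq, hSc.1.eq]
  have hTpcent : centeredSym Tp := by
    refine ⟨hTpsym, ?_⟩
    rw [hTp, Matrix.sub_mulVec, Matrix.smul_mulVec, hTcent.2, hSc.2, smul_zero, sub_zero]
  have hSperp : finner Shat Tp = 0 := by
    rw [hTp, finner_sub_right, finner_smul_right, hSS, mul_one, finner_comm Shat Tc, ← hΔdef,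
      sub_self]
  -- the Gaussian functional
  have hmapG := hE.2 Tp ⟨hTpcent, hSperp⟩
  set v : NNReal := Real.toNNReal ((1 - ρ ^ 2) / ((N : ℝ) - 1) * fnorm Tp ^ 2) with hv
  set G : Ω → ℝ := fun ω => finner Tp (E ω) with hG
  have hGaem : AEMeasurable G P :=
    aemeasurable_of_map_neZero (by rw [hmapG]; infer_instance)
  -- rewrite the event
  have hset : {ω | 0 < finner Tc (Rhat ω)} = G ⁻¹' (Set.Ioi (-(ρ * Δ))) := by
    ext ω
    simp only [Set.mem_setOf_eq, Set.mem_preimage, Set.mem_Ioi]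
    have hEω : finner Shat (E ω) = 0 := (hE.1 ω).2
    have hval : finner Tc (Rhat ω) = ρ * Δ + G ω := by
      have hGval : G ω = finner Tc (E ω) - Δ * finner Shat (E ω) := by
        show finner (Tc - Δ • Shat) (E ω) = _
        rw [finner_sub_left, finner_smul_left]
      rw [hR ω, finner_add_right, finner_smul_right, hGval, hEω, ← hΔdef]
      ring
    rw [hval]
    constructor <;> intro h <;> linarith
  have key : P {ω | 0 < finner Tc (Rhat ω)} = gaussianReal 0 v (Set.Ioi (-(ρ * Δ))) := by
    rw [hset, ← Measure.map_apply_of_aemeasurable hGaem measurableSet_Ioi, hmapG]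
  -- norm bounds
  have hadj : finner Tc Tc = finner C Tc := by
    have e1 : Tc * Tc = H * (C * (H * (C * H))) := by
      rw [hTc]
      simp only [Matrix.mul_assoc]
      rw [← Matrix.mul_assoc H H (C * H), hHH]
    have e3 : (C * (H * (C * H))) * H = C * (H * C * H) := by
      simp only [Matrix.mul_assoc]
      rw [hHH]
    rw [show finner Tc Tc = (Tc * Tc).trace by rw [finner, hTsym.eq],
      show finner C Tc = (C * Tc).trace by rw [finner, cosMask_transpose],
      e1, Matrix.trace_mul_comm, e3, hTc]
  have hTT0 := finner_self_nonneg Tc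
  have hcs := finner_cauchy C Tc
  rw [hC, cosMask_self i j k hij hik hjk, one_mul] at hcs
  rw [← hC, ← hadj] at hcs
  have hTle : finner Tc Tc ≤ 1 := by nlinarith [hTT0, hcs]
  have hperpsq : fnorm Tp ^ 2 = finner Tc Tc - Δ ^ 2 := by
    rw [fnorm, Real.sq_sqrt (finner_self_nonneg _)]
    rw [hTp, finner_sub_left, finner_sub_right, finner_sub_right, finner_smul_left,
      finner_smul_left, finner_smul_right, finner_smul_right, hSS, finner_comm Shat Tc, ← hΔdef]
    ring
  have hperp0 : 0 ≤ finner Tc Tc - Δ ^ 2 := by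
    rw [← hperpsq]; positivity
  -- N ≥ 1
  have hN1 : 1 ≤ N := by
    have h1 : 1 ≤ n - 1 := by omega
    have h2 : 2 ≤ n * (n - 1) := by
      calc 2 = 2 * 1 := by norm_num
      _ ≤ n * (n - 1) := Nat.mul_le_mul hn h1
    rw [hN]
    omega
  have hd : (0:ℝ) ≤ (N : ℝ) - 1 := by
    have : (1:ℝ) ≤ (N:ℝ) := by exact_mod_cast hN1
    linarith
  set Wv : ℝ := (2 / ((N : ℝ) - 1)) * (1 - ρ) with hWv
  have hWnn : 0 ≤ Wv := mul_nonneg (div_nonneg (by norm_num) hd) (by linarith)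
  have hvle : ((v : ℝ)) ≤ Wv := by
    rw [hv, Real.coe_toNNReal']
    refine max_le ?_ hWnn
    rw [hperpsq]
    rcases eq_or_lt_of_le hd with h0 | hdpos
    · rw [hWv, ← h0]
      simp
    · have hkey : (1 - ρ ^ 2) * (finner Tc Tc - Δ ^ 2) ≤ 2 * (1 - ρ) := by
        nlinarith [hperp0, hTle, hρ0, hρ1, sq_nonneg (1 - ρ), sq_nonneg Δ,
          mul_nonneg (by nlinarith [hρ0, hρ1] : (0:ℝ) ≤ 1 - ρ ^ 2)
            (by nlinarith [hperp0, hTle, sq_nonneg Δ] : (0:ℝ) ≤ 1 - (finner Tc Tc - Δ ^ 2))]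
      rw [hWv, div_mul_eq_mul_div, div_mul_eq_mul_div, div_le_div_iff₀ hdpos hdpos]
      exact mul_le_mul_of_nonneg_right hkey hdpos.le
  -- conclude
  have hc : 0 < ρ * Δ := mul_pos hρ0 hΔ
  rw [ge_iff_le, key]
  rcases eq_or_ne v 0 with hv0 | hv0
  · rw [hv0, gaussianReal_zero_var]
    rw [Measure.dirac_apply_of_mem (show (0:ℝ) ∈ Set.Ioi (-(ρ * Δ)) by
      simp only [Set.mem_Ioi]; linarith)]
    simpa using Phi_le_one _
  · rw [gauss_Ioi v hv0 (ρ * Δ)]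
    apply Phi_mono
    have hσv : 0 < Real.sqrt (v : ℝ) := Real.sqrt_pos.2 (by positivity)
    have hle : Real.sqrt (v : ℝ) ≤ Real.sqrt Wv := Real.sqrt_le_sqrt hvle
    have hσW : 0 < Real.sqrt Wv := lt_of_lt_of_le hσv hle
    exact (div_le_div_iff_of_pos_left hc hσW hσv).mpr hle
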